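/- Let A and P·A be m × n complex matrices (P an m × m matrix), L₁ an m × k complex matrix, Ω₂ a q × m complex matrix, and M a k × q complex matrix satisfying M·(Ω₂·L₁) = I_k (a left inverse of Ω₂·L₁). Then for every k × m complex matrix N, ‖L₁·M·Ω₂·(P·A) − P·A‖_F ≤ (‖L₁·M·Ω₂‖₂ + 1)·‖P·A − L₁·N·(P·A)‖_F. -/

import Mathlib

open Matrix

noncomputable def frobNorm {m n : ℕ} (A : Matrix (Fin m) (Fin n) ℂ) : ℝ :=
  Real.sqrt (∑ i, ∑ j, ‖A i j‖ ^ 2)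

noncomputable def opNorm {m n : ℕ} (A : Matrix (Fin m) (Fin n) ℂ) : ℝ :=
  ‖LinearMap.toContinuousLinearMap (Matrix.toEuclideanLin A)‖

section aux
attribute [local instance] Matrix.frobeniusNormedAddCommGroup

lemma frobNorm_eq {m n : ℕ} (A : Matrix (Fin m) (Fin n) ℂ) : frobNorm A = ‖A‖ := by
  rw [Matrix.frobenius_norm_def, frobNorm, Real.sqrt_eq_rpow]
  congr 1
  refine Finset.sum_congr rfl fun i _ => Finset.sum_congr rfl fun j _ => ?_
  rw [← Real.rpow_natCast]; norm_num

lemma frobNorm_sub_le {m n : ℕ} (X Y : Matrix (Fin m) (Fin n) ℂ) :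
    frobNorm (X - Y) ≤ frobNorm X + frobNorm Y := by
  simp only [frobNorm_eq]; exact norm_sub_le X Y

end aux

lemma frobNorm_mul_le {m n p : ℕ} (B : Matrix (Fin m) (Fin p) ℂ)
    (E : Matrix (Fin p) (Fin n) ℂ) :
    frobNorm (B * E) ≤ opNorm B * frobNorm E := by
  have hB : 0 ≤ opNorm B := norm_nonneg _
  set f : Fin n → EuclideanSpace ℂ (Fin p) :=
    fun j => (WithLp.equiv 2 (Fin p → ℂ)).symm (fun i => E i j) with hf
  have hcol : ∀ j, (fun i => (B * E) i j) = B *ᵥ (fun i => E i j) := by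
    intro j; funext i; simp [Matrix.mul_apply, Matrix.mulVec, dotProduct]
  have key : ∀ j : Fin n, ∑ i, ‖(B * E) i j‖ ^ 2 ≤ opNorm B ^ 2 * ∑ i, ‖E i j‖ ^ 2 := by
    intro j
    have h1 : ‖Matrix.toEuclideanLin B (f j)‖ ≤ opNorm B * ‖f j‖ := by
      have := (LinearMap.toContinuousLinearMap (Matrix.toEuclideanLin B)).le_opNorm (f j)
      simpa [opNorm] using this
    have h2 : ‖Matrix.toEuclideanLin B (f j)‖ ^ 2 ≤ (opNorm B * ‖f j‖) ^ 2 :=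
      pow_le_pow_left₀ (norm_nonneg _) h1 2
    have e1 : ‖Matrix.toEuclideanLin B (f j)‖ ^ 2 = ∑ i, ‖(B * E) i j‖ ^ 2 := by
      rw [Matrix.toEuclideanLin_apply, EuclideanSpace.norm_eq,
        Real.sq_sqrt (by positivity)]
      refine Finset.sum_congr rfl fun i _ => ?_
      have h : ((WithLp.equiv 2 (Fin m → ℂ)).symm
          (B *ᵥ (WithLp.equiv 2 (Fin p → ℂ)) (f j))) i = (B * E) i j := by
        simp only [hf, Equiv.apply_symm_apply]
        exact (congrFun (hcol j) i).symm
      exact congrArg (fun z : ℂ => ‖z‖ ^ 2) h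
    have e2 : ‖f j‖ ^ 2 = ∑ i, ‖E i j‖ ^ 2 := by
      rw [EuclideanSpace.norm_eq, Real.sq_sqrt (by positivity)]
      rfl
    calc ∑ i, ‖(B * E) i j‖ ^ 2 = ‖Matrix.toEuclideanLin B (f j)‖ ^ 2 := e1.symm
      _ ≤ (opNorm B * ‖f j‖) ^ 2 := h2
      _ = opNorm B ^ 2 * ∑ i, ‖E i j‖ ^ 2 := by rw [mul_pow, e2]
  have hsum : ∑ j, ∑ i, ‖(B * E) i j‖ ^ 2 ≤ opNorm B ^ 2 * ∑ j, ∑ i, ‖E i j‖ ^ 2 := by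
    rw [Finset.mul_sum]
    exact Finset.sum_le_sum fun j _ => key j
  calc frobNorm (B * E) = Real.sqrt (∑ j, ∑ i, ‖(B * E) i j‖ ^ 2) := by
        rw [frobNorm, Finset.sum_comm]
    _ ≤ Real.sqrt (opNorm B ^ 2 * ∑ j, ∑ i, ‖E i j‖ ^ 2) := Real.sqrt_le_sqrt hsum
    _ = opNorm B * frobNorm E := by
        rw [Real.sqrt_mul (by positivity), Real.sqrt_sq hB, frobNorm, Finset.sum_comm]

theorem oblique_projection_bound {m n k q : ℕ}
    (A : Matrix (Fin m) (Fin n) ℂ) (P : Matrix (Fin m) (Fin m) ℂ)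
    (L₁ : Matrix (Fin m) (Fin k) ℂ) (Ω₂ : Matrix (Fin q) (Fin m) ℂ)
    (M : Matrix (Fin k) (Fin q) ℂ) (hM : M * (Ω₂ * L₁) = 1)
    (N : Matrix (Fin k) (Fin m) ℂ) :
    frobNorm (L₁ * M * Ω₂ * (P * A) - P * A) ≤
      (opNorm (L₁ * M * Ω₂) + 1) * frobNorm (P * A - L₁ * N * (P * A)) := by
  set T := L₁ * M * Ω₂ with hT
  set E := P * A - L₁ * N * (P * A) with hE
  have hTL : T * L₁ = L₁ := by
    calc T * L₁ = L₁ * (M * (Ω₂ * L₁)) := by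
          rw [hT, Matrix.mul_assoc, Matrix.mul_assoc]
      _ = L₁ := by rw [hM, Matrix.mul_one]
  have hid : T * (P * A) - P * A = T * E - E := by
    have h3 : T * (L₁ * N * (P * A)) = L₁ * N * (P * A) := by
      simp only [← Matrix.mul_assoc]
      rw [hTL]
    rw [hE, Matrix.mul_sub, h3]
    abel
  calc frobNorm (T * (P * A) - P * A) = frobNorm (T * E - E) := by rw [hid]
    _ ≤ frobNorm (T * E) + frobNorm E := frobNorm_sub_le _ _
    _ ≤ opNorm T * frobNorm E + frobNorm E := by
        linarith [frobNorm_mul_le T E]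
    _ = (opNorm T + 1) * frobNorm E := by ring
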